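/- Let 𝔐 = (M^λ)_{λ>0} be a weight sequence system on ℝ^d satisfying {L} and {𝔐.2}', and let 𝒲 = (w^λ)_{λ>0} be a weight function system on ℝ^d satisfying {wM} and {N}. Then a smooth function φ : ℝ^d → ℂ belongs to the Roumieu Gelfand–Shilov class 𝒮^{{𝔐}}_{{𝒲}} (that is, there exists λ > 0 with sup_{α∈ℕ^d} sup_{x∈ℝ^d} |∂^α φ(x)| w^λ(x)/M^λ_α < ∞) if and only if for every family (M_α)_{α∈ℕ^d} of positive reals with sup_{α} M^λ_α/M_α < ∞ for all λ > 0, and every nonnegative upper semicontinuous function w on ℝ^d with sup_{x} w(x)/w^λ(x) < ∞ for all λ > 0, one has sup_{α∈ℕ^d} sup_{x∈ℝ^d} |∂^α φ(x)| w(x)/M_α < ∞. -/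

import Mathlib

open MeasureTheory Filter ENNReal Asymptotics

noncomputable section

/-- Partial derivative in the `i`-th coordinate direction. -/
def pd (d : ℕ) (i : Fin d) (f : EuclideanSpace ℝ (Fin d) → ℂ) :
    EuclideanSpace ℝ (Fin d) → ℂ :=
  fun x => fderiv ℝ f x (EuclideanSpace.single i 1)

/-- Iterated partial derivative in the `i`-th coordinate direction. -/
def pdPow (d : ℕ) (i : Fin d) :
    ℕ → (EuclideanSpace ℝ (Fin d) → ℂ) → EuclideanSpace ℝ (Fin d) → ℂ
  | 0, f => f
  | n + 1, f => pd d i (pdPow d i n f)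

/-- Mixed partial derivative `∂^α` for a multi-index `α : Fin d → ℕ`. -/
def pdMulti (d : ℕ) (α : Fin d → ℕ) (f : EuclideanSpace ℝ (Fin d) → ℂ) :
    EuclideanSpace ℝ (Fin d) → ℂ :=
  (List.finRange d).foldr (fun i g => pdPow d i (α i) g) f

/-- The Gelfand–Shilov seminorm `‖φ‖_{𝒮^M_{w,q}}`, as an `ℝ≥0∞`-valued quantity:
`sup_α ‖(∂^α φ)·w‖_{L^q} / M_α`. -/
def gsNorm (d : ℕ) (M : (Fin d → ℕ) → ℝ) (w : EuclideanSpace ℝ (Fin d) → ℝ)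
    (q : ℝ≥0∞) (φ : EuclideanSpace ℝ (Fin d) → ℂ) : ℝ≥0∞ :=
  ⨆ α : Fin d → ℕ,
    eLpNorm (fun x => ‖pdMulti d α φ x‖ * w x) q volume / ENNReal.ofReal (M α)

/-- The lattice point of `ℤ^d` inside `ℝ^d`. -/
def intPt (d : ℕ) (j : Fin d → ℤ) : EuclideanSpace ℝ (Fin d) :=
  (WithLp.equiv 2 (Fin d → ℝ)).symm fun i => (j i : ℝ)

/-- The associated function `ω_M(x) = sup_α log (|x^α| M_0 / M_α)` of a (multi-indexed)
sequence `M`. -/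
def assocFun (d : ℕ) (M : (Fin d → ℕ) → ℝ) (x : EuclideanSpace ℝ (Fin d)) : ℝ :=
  ⨆ α : Fin d → ℕ, Real.log ((∏ i, |x i| ^ α i) * M 0 / M α)

/-- `w` is a weight function system on `ℝ^d`: each `w λ` (for `λ > 0`) is continuous, `≥ 1`,
and `w λ ≤ w μ` pointwise whenever `μ ≤ λ`. -/
structure IsWFS (d : ℕ) (w : ℝ → EuclideanSpace ℝ (Fin d) → ℝ) : Prop where
  cont : ∀ l, 0 < l → Continuous (w l)
  one_le : ∀ l, 0 < l → ∀ x, 1 ≤ w l x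
  mono : ∀ m l, 0 < m → m ≤ l → ∀ x, w l x ≤ w m x

/-- Condition (wM) (Beurling) for a weight function system. -/
def WFS_wM_B (d : ℕ) (w : ℝ → EuclideanSpace ℝ (Fin d) → ℝ) : Prop :=
  ∀ l, 0 < l → ∃ m, 0 < m ∧ ∃ C, 0 < C ∧
    ∀ x y : EuclideanSpace ℝ (Fin d), ‖y‖ ≤ 1 → w l (x + y) ≤ C * w m x

/-- Condition {wM} (Roumieu) for a weight function system. -/
def WFS_wM_R (d : ℕ) (w : ℝ → EuclideanSpace ℝ (Fin d) → ℝ) : Prop :=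
  ∀ m, 0 < m → ∃ l, 0 < l ∧ ∃ C, 0 < C ∧
    ∀ x y : EuclideanSpace ℝ (Fin d), ‖y‖ ≤ 1 → w l (x + y) ≤ C * w m x

/-- Condition (M) (Beurling) for a weight function system. -/
def WFS_M_B (d : ℕ) (w : ℝ → EuclideanSpace ℝ (Fin d) → ℝ) : Prop :=
  ∀ l, 0 < l → ∃ m, 0 < m ∧ ∃ n, 0 < n ∧ ∃ C, 0 < C ∧
    ∀ x y : EuclideanSpace ℝ (Fin d), w l (x + y) ≤ C * w m x * w n y

/-- Condition (N) (Beurling) for a weight function system. -/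
def WFS_N_B (d : ℕ) (w : ℝ → EuclideanSpace ℝ (Fin d) → ℝ) : Prop :=
  ∀ l, 0 < l → ∃ m, 0 < m ∧ Integrable (fun x => w l x / w m x) volume

/-- Condition {N} (Roumieu) for a weight function system. -/
def WFS_N_R (d : ℕ) (w : ℝ → EuclideanSpace ℝ (Fin d) → ℝ) : Prop :=
  ∀ m, 0 < m → ∃ l, 0 < l ∧ Integrable (fun x => w l x / w m x) volume

/-- `M` is a weight sequence system on `ℝ^d`: each `M λ` (for `λ > 0`) is a positive
sequence with `(M^λ_α)^{1/|α|} → ∞` satisfying the log-convexity condition (M.1), and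
`M^λ_α ≤ M^μ_α` whenever `λ ≤ μ`. -/
structure IsWSS (d : ℕ) (M : ℝ → (Fin d → ℕ) → ℝ) : Prop where
  pos : ∀ l, 0 < l → ∀ α, 0 < M l α
  growth : ∀ l, 0 < l → ∀ R : ℝ, 0 < R → ∃ N : ℕ, ∀ α : Fin d → ℕ,
    N ≤ ∑ i, α i → R ^ (∑ i, α i) ≤ M l α
  logconvex : ∀ l, 0 < l → ∀ (α : Fin d → ℕ) (j : Fin d),
    M l (α + Pi.single j 1) ^ 2 ≤ M l α * M l (α + Pi.single j 2)
  mono : ∀ l m, 0 < l → l ≤ m → ∀ α, M l α ≤ M m α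

/-- Condition (L) (Beurling) for a weight sequence system. -/
def WSS_L_B (d : ℕ) (M : ℝ → (Fin d → ℕ) → ℝ) : Prop :=
  ∀ R : ℝ, 0 < R → ∀ l, 0 < l → ∃ m, 0 < m ∧ ∃ C, 0 < C ∧
    ∀ α : Fin d → ℕ, R ^ (∑ i, α i) * M m α ≤ C * M l α

/-- Condition {L} (Roumieu) for a weight sequence system. -/
def WSS_L_R (d : ℕ) (M : ℝ → (Fin d → ℕ) → ℝ) : Prop :=
  ∀ R : ℝ, 0 < R → ∀ m, 0 < m → ∃ l, 0 < l ∧ ∃ C, 0 < C ∧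
    ∀ α : Fin d → ℕ, R ^ (∑ i, α i) * M m α ≤ C * M l α

/-- Condition (𝔐.2)' (Beurling) for a weight sequence system. -/
def WSS_M2_B (d : ℕ) (M : ℝ → (Fin d → ℕ) → ℝ) : Prop :=
  ∀ l, 0 < l → ∃ m, 0 < m ∧ ∃ C, 0 < C ∧ ∃ H, 0 < H ∧
    ∀ (α : Fin d → ℕ) (j : Fin d),
      M m (α + Pi.single j 1) ≤ C * H ^ (∑ i, α i) * M l α

/-- Condition {𝔐.2}' (Roumieu) for a weight sequence system. -/
def WSS_M2_R (d : ℕ) (M : ℝ → (Fin d → ℕ) → ℝ) : Prop :=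
  ∀ m, 0 < m → ∃ l, 0 < l ∧ ∃ C, 0 < C ∧ ∃ H, 0 < H ∧
    ∀ (α : Fin d → ℕ) (j : Fin d),
      M l (α + Pi.single j 1) ≤ C * H ^ (∑ i, α i) * M m α

/-- A weight sequence system is accelerating if `M^λ_{α+e_j}/M^λ_α ≤ M^μ_{α+e_j}/M^μ_α`
for `λ ≤ μ`. -/
def WSSAccel (d : ℕ) (M : ℝ → (Fin d → ℕ) → ℝ) : Prop :=
  ∀ l m, 0 < l → l ≤ m → ∀ (α : Fin d → ℕ) (j : Fin d),
    M l (α + Pi.single j 1) / M l α ≤ M m (α + Pi.single j 1) / M m α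

/-- A weight sequence system is isotropically decomposable: there is a partition of the `d`
coordinates into `k` blocks (equivalently, after a permutation of the coordinates, a
decomposition `ℕ^d = ℕ^{d_1} × ⋯ × ℕ^{d_k}`) and positive functions `m^λ_j : ℕ → (0,∞)` with
`M^λ_α = ∏_j m^λ_j (|α^{(j)}|)`. -/
def IsoDecomposable (d : ℕ) (M : ℝ → (Fin d → ℕ) → ℝ) : Prop :=
  ∃ (k : ℕ) (b : Fin d → Fin k) (m : ℝ → Fin k → ℕ → ℝ),
    (∀ l, 0 < l → ∀ j n, 0 < m l j n) ∧
    ∀ l, 0 < l → ∀ α : Fin d → ℕ,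
      M l α = ∏ j, m l j (∑ i ∈ Finset.univ.filter fun i => b i = j, α i)

/-- Membership in the Beurling Gelfand–Shilov class `𝒮^{(𝔐)}_{(𝒲),q}`. -/
def gsBeurling (d : ℕ) (M : ℝ → (Fin d → ℕ) → ℝ) (w : ℝ → EuclideanSpace ℝ (Fin d) → ℝ)
    (q : ℝ≥0∞) (φ : EuclideanSpace ℝ (Fin d) → ℂ) : Prop :=
  ContDiff ℝ (⊤ : ℕ∞) φ ∧ ∀ l, 0 < l → gsNorm d (M l) (w l) q φ < ⊤

/-- Membership in the Roumieu Gelfand–Shilov class `𝒮^{{𝔐}}_{{𝒲},q}`. -/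
def gsRoumieu (d : ℕ) (M : ℝ → (Fin d → ℕ) → ℝ) (w : ℝ → EuclideanSpace ℝ (Fin d) → ℝ)
    (q : ℝ≥0∞) (φ : EuclideanSpace ℝ (Fin d) → ℂ) : Prop :=
  ContDiff ℝ (⊤ : ℕ∞) φ ∧ ∃ l, 0 < l ∧ gsNorm d (M l) (w l) q φ < ⊤

/-- Membership in the auxiliary space `𝒮̃^{(𝔐)}_{(𝒲)}`. -/
def gsTilde (d : ℕ) (M : ℝ → (Fin d → ℕ) → ℝ) (w : ℝ → EuclideanSpace ℝ (Fin d) → ℝ)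
    (ψ : EuclideanSpace ℝ (Fin d) → ℂ) : Prop :=
  ContDiff ℝ (⊤ : ℕ∞) ψ ∧ ∀ l, 0 < l → ∀ k : ℕ, ∃ C : ℝ,
    ∀ (α : Fin d → ℕ) (x : EuclideanSpace ℝ (Fin d)),
      ‖pdMulti d α ψ x‖ * (1 + ‖x‖) ^ k * w l x / M l α ≤ C

end

/-- Projective description of the Roumieu Gelfand–Shilov class `𝒮^{{𝔐}}_{{𝒲}}`: a smooth `φ`
belongs to it iff `sup_{α,x} |∂^α φ(x)| w(x)/M_α < ∞` for every `M` in the maximal Nachbin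
family `V̄(𝔐)` and every `w` in the maximal Nachbin family `V̄(𝒲)`. -/
theorem stmt17 (d : ℕ) (M : ℝ → (Fin d → ℕ) → ℝ) (w : ℝ → EuclideanSpace ℝ (Fin d) → ℝ)
    (hM : IsWSS d M) (hL : WSS_L_R d M) (hM2 : WSS_M2_R d M)
    (hW : IsWFS d w) (hwM : WFS_wM_R d w) (hN : WFS_N_R d w)
    (φ : EuclideanSpace ℝ (Fin d) → ℂ) (hφ : ContDiff ℝ (⊤ : ℕ∞) φ) :
    (∃ l, 0 < l ∧ ∃ C : ℝ, ∀ (α : Fin d → ℕ) (x : EuclideanSpace ℝ (Fin d)),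
      ‖pdMulti d α φ x‖ * w l x / M l α ≤ C) ↔
    (∀ MM : (Fin d → ℕ) → ℝ, (∀ α, 0 < MM α) →
      (∀ l, 0 < l → ∃ C : ℝ, ∀ α, M l α / MM α ≤ C) →
      ∀ ww : EuclideanSpace ℝ (Fin d) → ℝ, (∀ x, 0 ≤ ww x) → UpperSemicontinuous ww →
        (∀ l, 0 < l → ∃ C : ℝ, ∀ x, ww x / w l x ≤ C) →
        ∃ C : ℝ, ∀ (α : Fin d → ℕ) (x : EuclideanSpace ℝ (Fin d)),
          ‖pdMulti d α φ x‖ * ww x / MM α ≤ C) := by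
  classical
  constructor
  · rintro ⟨l, hl, C, hC⟩ MM hMMpos hMMdom ww hwwnn _ hwwdom
    obtain ⟨C1, hC1⟩ := hMMdom l hl
    obtain ⟨C2, hC2⟩ := hwwdom l hl
    refine ⟨C * C2 * C1, fun α x => ?_⟩
    have hMl : 0 < M l α := hM.pos l hl α
    have hMMa : 0 < MM α := hMMpos α
    have hwl : (1:ℝ) ≤ w l x := hW.one_le l hl x
    have hwl0 : 0 < w l x := lt_of_lt_of_le one_pos hwl
    have key : ‖pdMulti d α φ x‖ * ww x / MM α
        = (‖pdMulti d α φ x‖ * w l x / M l α) * (ww x / w l x) * (M l α / MM α) := by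
      field_simp
    rw [key]
    have h1 : 0 ≤ ‖pdMulti d α φ x‖ * w l x / M l α := by positivity
    have h2 : 0 ≤ ww x / w l x := div_nonneg (hwwnn x) hwl0.le
    have h3 : 0 ≤ M l α / MM α := by positivity
    have hb1 := hC α x
    have hb2 := hC2 x
    have hb3 := hC1 α
    have hC0 : 0 ≤ C := le_trans h1 hb1
    have hC20 : 0 ≤ C2 := le_trans h2 hb2
    have hstep : (‖pdMulti d α φ x‖ * w l x / M l α) * (ww x / w l x) ≤ C * C2 :=
      mul_le_mul hb1 hb2 h2 hC0
    exact mul_le_mul hstep hb3 h3 (by positivity)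
  · intro hRHS
    by_contra hcon
    push_neg at hcon
    choose A X hAX using fun n : ℕ => hcon ((n:ℝ)+1) (by positivity) (n:ℝ)
    -- construct MM in the maximal Nachbin family
    set MM : (Fin d → ℕ) → ℝ := fun β =>
      if h : ∃ n, A n = β then M ((Nat.find h : ℝ)+1) β
      else M (((∑ i, β i : ℕ):ℝ)+1) β with hMMdef
    have hMMpos : ∀ β, 0 < MM β := by
      intro β
      simp only [hMMdef]
      split
      · exact hM.pos _ (by positivity) β
      · exact hM.pos _ (by positivity) β
    have hMMle : ∀ n : ℕ, MM (A n) ≤ M ((n:ℝ)+1) (A n) := by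
      intro n
      have h : ∃ m, A m = A n := ⟨n, rfl⟩
      simp only [hMMdef, dif_pos h]
      have hfind : Nat.find h ≤ n := Nat.find_min' h rfl
      refine hM.mono _ _ (by positivity) ?_ (A n)
      have : (Nat.find h : ℝ) ≤ (n : ℝ) := Nat.cast_le.mpr hfind
      linarith
    have hMMdom : ∀ l, 0 < l → ∃ C : ℝ, ∀ β, M l β / MM β ≤ C := by
      intro l hl
      set N : ℕ := ⌈l⌉₊ with hNdef
      have hlN : l ≤ (N:ℝ) := Nat.le_ceil l
      have hNpos : (0:ℝ) < (N:ℝ) := lt_of_lt_of_le hl hlN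
      set S1 : ℝ := ∑ m ∈ Finset.range N, M (N:ℝ) (A m) / M ((m:ℝ)+1) (A m) with hS1def
      set S2 : ℝ := ∑ γ : Fin d → Fin N,
        M (N:ℝ) (fun i => (γ i : ℕ)) / M 1 (fun i => (γ i : ℕ)) with hS2def
      have hS1nn : 0 ≤ S1 :=
        Finset.sum_nonneg fun m _ =>
          div_nonneg (hM.pos _ hNpos _).le (hM.pos _ (by positivity) _).le
      have hS2nn : 0 ≤ S2 :=
        Finset.sum_nonneg fun γ _ =>
          div_nonneg (hM.pos _ hNpos _).le (hM.pos _ one_pos _).le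
      refine ⟨1 + S1 + S2, fun β => ?_⟩
      simp only [hMMdef]
      by_cases h : ∃ n, A n = β
      · rw [dif_pos h]
        set m := Nat.find h with hmdef
        have hmspec : A m = β := Nat.find_spec h
        by_cases hle : l ≤ (m : ℝ)+1
        · have hnum : M l β ≤ M ((m:ℝ)+1) β := hM.mono _ _ hl hle β
          have := div_le_one_of_le₀ hnum (hM.pos _ (by positivity) β).le
          linarith
        · push_neg at hle
          have hmN : m ∈ Finset.range N := by
            have h1 : ((m+1 : ℕ):ℝ) ≤ (N:ℝ) := by push_cast; linarith
            have h2 : m + 1 ≤ N := Nat.cast_le.mp h1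
            exact Finset.mem_range.mpr (by omega)
          have hden : 0 < M ((m:ℝ)+1) β := hM.pos _ (by positivity) β
          have hnum : M l β ≤ M (N:ℝ) β := hM.mono _ _ hl hlN β
          have hratio : M l β / M ((m:ℝ)+1) β ≤ M (N:ℝ) β / M ((m:ℝ)+1) β :=
            div_le_div_of_nonneg_right hnum hden.le
          have hterm : M (N:ℝ) β / M ((m:ℝ)+1) β
              = M (N:ℝ) (A m) / M ((m:ℝ)+1) (A m) := by rw [hmspec]
          have hsingle : M (N:ℝ) (A m) / M ((m:ℝ)+1) (A m) ≤ S1 := by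
            rw [hS1def]
            exact Finset.single_le_sum (f := fun m => M (N:ℝ) (A m) / M ((m:ℝ)+1) (A m))
              (fun i _ => div_nonneg (hM.pos _ hNpos _).le (hM.pos _ (by positivity) _).le) hmN
          linarith
      · rw [dif_neg h]
        set s : ℕ := ∑ i, β i with hsdef
        by_cases hle : l ≤ (s : ℝ)+1
        · have hnum : M l β ≤ M ((s:ℝ)+1) β := hM.mono _ _ hl hle β
          have := div_le_one_of_le₀ hnum (hM.pos _ (by positivity) β).le
          linarith
        · push_neg at hle
          have hsN : s + 1 ≤ N := by
            have h1 : ((s+1 : ℕ):ℝ) ≤ (N:ℝ) := by push_cast; linarith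
            exact Nat.cast_le.mp h1
          have hβlt : ∀ i, β i < N := by
            intro i
            have : β i ≤ s := by
              rw [hsdef]
              exact Finset.single_le_sum (fun j _ => Nat.zero_le (β j)) (Finset.mem_univ i)
            omega
          set γ : Fin d → Fin N := fun i => ⟨β i, hβlt i⟩ with hγdef
          have hγβ : (fun i => (γ i : ℕ)) = β := by funext i; rfl
          have hden : 0 < M ((s:ℝ)+1) β := hM.pos _ (by positivity) β
          have hratio : M l β / M ((s:ℝ)+1) β ≤ M (N:ℝ) β / M 1 β := by
            refine div_le_div₀ (hM.pos _ hNpos β).le (hM.mono _ _ hl hlN β) (hM.pos _ one_pos β) ?_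
            exact hM.mono _ _ one_pos (le_add_of_nonneg_left (by positivity)) β
          have hsingle : M (N:ℝ) (fun i => (γ i : ℕ)) / M 1 (fun i => (γ i : ℕ)) ≤ S2 := by
            rw [hS2def]
            exact Finset.single_le_sum
              (f := fun δ : Fin d → Fin N => M (N:ℝ) (fun i => (δ i : ℕ)) / M 1 (fun i => (δ i : ℕ)))
              (fun g _ => div_nonneg (hM.pos _ hNpos _).le (hM.pos _ one_pos _).le)
              (Finset.mem_univ γ)
          rw [hγβ] at hsingle
          linarith
    -- now build ww, splitting on whether (X n) has a bounded subsequence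
    by_cases hbd : ∃ R : ℝ, {n : ℕ | ‖X n‖ ≤ R}.Infinite
    · obtain ⟨R, hRinf⟩ := hbd
      obtain ⟨n0, hn0⟩ := hRinf.nonempty
      have hR0 : 0 ≤ R := le_trans (norm_nonneg _) hn0
      set ww : EuclideanSpace ℝ (Fin d) → ℝ :=
        (Metric.closedBall (0:EuclideanSpace ℝ (Fin d)) R).indicator (fun _ => (1:ℝ)) with hwwdef
      have hwwnn : ∀ x, 0 ≤ ww x := fun x => Set.indicator_nonneg (fun _ _ => zero_le_one) x
      have hwwle : ∀ x, ww x ≤ 1 := by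
        intro x
        by_cases hx : x ∈ Metric.closedBall (0:EuclideanSpace ℝ (Fin d)) R
        · rw [hwwdef, Set.indicator_of_mem hx]
        · rw [hwwdef, Set.indicator_of_notMem hx]; exact zero_le_one
      have husc : UpperSemicontinuous ww :=
        Metric.isClosed_closedBall.upperSemicontinuous_indicator zero_le_one
      have hwwdom : ∀ l, 0 < l → ∃ C : ℝ, ∀ x, ww x / w l x ≤ C := by
        intro l hl
        exact ⟨1, fun x => div_le_one_of_le₀ (le_trans (hwwle x) (hW.one_le l hl x))
          (le_trans zero_le_one (hW.one_le l hl x))⟩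
      obtain ⟨C, hC⟩ := hRHS MM hMMpos hMMdom ww hwwnn husc hwwdom
      obtain ⟨B1, hB1⟩ := (isCompact_closedBall (0:EuclideanSpace ℝ (Fin d)) R).exists_bound_of_continuousOn
        ((hW.cont 1 one_pos).continuousOn)
      have hB1' : ∀ x ∈ Metric.closedBall (0:EuclideanSpace ℝ (Fin d)) R, w 1 x ≤ B1 :=
        fun x hx => le_trans (le_abs_self _) (by simpa [Real.norm_eq_abs] using hB1 x hx)
      -- pick n in the infinite set large enough
      set m0 : ℕ := ⌈B1 * C⌉₊ with hm0def
      have hex : ∃ n ∈ {n : ℕ | ‖X n‖ ≤ R}, m0 < n := by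
        by_contra hno
        push_neg at hno
        exact hRinf (Set.Finite.subset (Set.finite_Iic m0) (fun n hn => hno n hn))
      obtain ⟨n, hnS, hnm⟩ := hex
      have hmem : X n ∈ Metric.closedBall (0:EuclideanSpace ℝ (Fin d)) R := by
        simpa [Metric.mem_closedBall, dist_eq_norm] using hnS
      have hw1 : w ((n:ℝ)+1) (X n) ≤ B1 :=
        le_trans (hW.mono 1 ((n:ℝ)+1) one_pos (by push_cast; linarith [Nat.cast_nonneg (α := ℝ) n]) (X n))
          (hB1' _ hmem)
      have hB1pos : (0:ℝ) < B1 :=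
        lt_of_lt_of_le one_pos (le_trans (hW.one_le 1 one_pos (X n)) (hB1' _ hmem))
      have hwwXn : ww (X n) = 1 := by rw [hwwdef, Set.indicator_of_mem hmem]
      have hchain : ‖pdMulti d (A n) φ (X n)‖ * w ((n:ℝ)+1) (X n) / M ((n:ℝ)+1) (A n)
          ≤ B1 * (‖pdMulti d (A n) φ (X n)‖ * ww (X n) / MM (A n)) := by
        have h1 : ‖pdMulti d (A n) φ (X n)‖ * w ((n:ℝ)+1) (X n) / M ((n:ℝ)+1) (A n)
            ≤ ‖pdMulti d (A n) φ (X n)‖ * B1 / MM (A n) :=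
          div_le_div₀ (by positivity) (mul_le_mul_of_nonneg_left hw1 (norm_nonneg _))
            (hMMpos _) (hMMle n)
        have h2 : ‖pdMulti d (A n) φ (X n)‖ * B1 / MM (A n)
            = B1 * (‖pdMulti d (A n) φ (X n)‖ * ww (X n) / MM (A n)) := by
          rw [hwwXn]; ring
        linarith
      have hfin1 : (n:ℝ) < B1 * C := by
        have := hAX n
        have hCb := hC (A n) (X n)
        have := mul_le_mul_of_nonneg_left hCb hB1pos.le
        linarith
      have : B1 * C ≤ (m0:ℝ) := Nat.le_ceil _
      have : (m0:ℝ) < (n:ℝ) := Nat.cast_lt.mpr hnm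
      linarith
    · push_neg at hbd
      have hfin : ∀ R : ℝ, {n : ℕ | ‖X n‖ ≤ R}.Finite := fun R => hbd R
      have hstep : ∀ m : ℕ, ∃ n, m < n ∧ ‖X m‖ + 2 < ‖X n‖ := by
        intro m
        have hfin2 : ({n : ℕ | ‖X n‖ ≤ ‖X m‖ + 2} ∪ Set.Iic m).Finite :=
          (hfin _).union (Set.finite_Iic m)
        obtain ⟨n, hn⟩ := hfin2.infinite_compl.nonempty
        simp only [Set.mem_compl_iff, Set.mem_union, Set.mem_setOf_eq, Set.mem_Iic,
          not_or, not_le] at hn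
        exact ⟨n, hn.2, hn.1⟩
      choose F hF1 hF2 using hstep
      set g : ℕ → ℕ := fun k => F^[k] 0 with hgdef
      have hgsucc : ∀ k, g (k+1) = F (g k) := fun k => Function.iterate_succ_apply' F k 0
      have hgmono : StrictMono g :=
        strictMono_nat_of_lt_succ (fun k => by rw [hgsucc]; exact hF1 (g k))
      have hnorm : ∀ k, ‖X (g k)‖ + 2 < ‖X (g (k+1))‖ := fun k => by
        rw [hgsucc]; exact hF2 (g k)
      have hnmono : Monotone (fun k => ‖X (g k)‖) :=
        monotone_nat_of_le_succ (fun k => by linarith [hnorm k])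
      have hnormmono : ∀ j k, j < k → ‖X (g j)‖ + 2 ≤ ‖X (g k)‖ := by
        intro j k hjk
        calc ‖X (g j)‖ + 2 ≤ ‖X (g (j+1))‖ := (hnorm j).le
          _ ≤ ‖X (g k)‖ := hnmono hjk
      have hsep : ∀ j k, j ≠ k → 2 ≤ dist (X (g j)) (X (g k)) := by
        intro j k hjk
        rcases hjk.lt_or_gt with hlt | hlt
        · rw [dist_eq_norm, norm_sub_rev]
          linarith [norm_sub_norm_le (X (g k)) (X (g j)), hnormmono j k hlt]
        · rw [dist_eq_norm]
          linarith [norm_sub_norm_le (X (g j)) (X (g k)), hnormmono k j hlt]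
      set ww : EuclideanSpace ℝ (Fin d) → ℝ := fun x =>
        if h : ∃ k, X (g k) = x then w ((g (Nat.find h) : ℝ)+1) x else 0 with hwwdef
      have hwwnn : ∀ x, 0 ≤ ww x := by
        intro x
        simp only [hwwdef]
        split
        · exact le_trans zero_le_one (hW.one_le _ (by positivity) x)
        · exact le_refl 0
      have husc : UpperSemicontinuous ww := by
        intro z y hzy
        have hy0 : 0 < y := lt_of_le_of_lt (hwwnn z) hzy
        have hr : ∃ r : ℝ, 0 < r ∧ ∀ x, dist x z < r → x ≠ z → ww x = 0 := by
          by_cases hz : ∃ k, dist (X (g k)) z < 1 ∧ X (g k) ≠ z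
          · obtain ⟨k0, hk0d, hk0ne⟩ := hz
            refine ⟨min (dist (X (g k0)) z) 1, lt_min (dist_pos.mpr hk0ne) one_pos, ?_⟩
            intro x hx hxz
            simp only [hwwdef]
            rw [dif_neg]
            rintro ⟨k, hk⟩
            by_cases hkk : k = k0
            · rw [hkk] at hk
              have h1 : dist x z < dist (X (g k0)) z := lt_of_lt_of_le hx (min_le_left _ _)
              rw [hk] at h1
              exact lt_irrefl _ h1
            · have h2 := hsep k k0 hkk
              have h3 : dist (X (g k)) (X (g k0)) ≤ dist (X (g k)) z + dist (X (g k0)) z := by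
                rw [dist_comm (X (g k0)) z]
                exact dist_triangle _ _ _
              rw [hk] at h2 h3
              have h4 : dist x z < 1 := lt_of_lt_of_le hx (min_le_right _ _)
              linarith
          · push_neg at hz
            refine ⟨1, one_pos, ?_⟩
            intro x hx hxz
            simp only [hwwdef]
            rw [dif_neg]
            rintro ⟨k, hk⟩
            have hd : dist (X (g k)) z < 1 := by rw [hk]; exact hx
            exact hxz (by rw [← hk]; exact hz k hd)
        obtain ⟨r, hr0, hrprop⟩ := hr
        rw [Metric.eventually_nhds_iff]
        refine ⟨r, hr0, fun x hx => ?_⟩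
        by_cases hxz : x = z
        · rw [hxz]; exact hzy
        · show ww x < y; rw [hrprop x hx hxz]; exact hy0
      have hwwdom : ∀ l, 0 < l → ∃ C : ℝ, ∀ x, ww x / w l x ≤ C := by
        intro l hl
        set N : ℕ := ⌈l⌉₊ with hNdef
        have hlN : l ≤ (N:ℝ) := Nat.le_ceil l
        set S1 : ℝ := ∑ j ∈ Finset.range N, w ((g j : ℝ)+1) (X (g j)) with hS1def
        have hS1nn : 0 ≤ S1 :=
          Finset.sum_nonneg fun j _ => le_trans zero_le_one (hW.one_le _ (by positivity) _)
        refine ⟨1 + S1, fun x => ?_⟩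
        have hwlx : (1:ℝ) ≤ w l x := hW.one_le l hl x
        simp only [hwwdef]
        by_cases h : ∃ k, X (g k) = x
        · rw [dif_pos h]
          set j := Nat.find h with hjdef
          have hjx : X (g j) = x := Nat.find_spec h
          by_cases hle : l ≤ (g j : ℝ)+1
          · have h1 : w ((g j:ℝ)+1) x ≤ w l x := hW.mono l _ hl hle x
            have := div_le_one_of_le₀ h1 (by linarith)
            linarith
          · push_neg at hle
            have hjN : j ∈ Finset.range N := by
              have h1 : ((g j + 1 : ℕ):ℝ) ≤ (N:ℝ) := by push_cast; linarith
              have h2 : g j + 1 ≤ N := Nat.cast_le.mp h1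
              have h3 : j ≤ g j := hgmono.le_apply
              exact Finset.mem_range.mpr (by omega)
            have hterm : w ((g j:ℝ)+1) x / w l x ≤ w ((g j:ℝ)+1) x :=
              div_le_self (le_trans zero_le_one (hW.one_le _ (by positivity) x)) hwlx
            have hsingle : w ((g j:ℝ)+1) (X (g j)) ≤ S1 := by
              rw [hS1def]
              exact Finset.single_le_sum (f := fun j => w ((g j : ℝ)+1) (X (g j)))
                (fun i _ => le_trans zero_le_one (hW.one_le _ (by positivity) _)) hjN
            rw [hjx] at hsingle
            linarith
        · rw [dif_neg h, zero_div]
          linarith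
      obtain ⟨C, hC⟩ := hRHS MM hMMpos hMMdom ww hwwnn husc hwwdom
      set k0 : ℕ := ⌈C⌉₊ + 1 with hk0def
      have hgk : (k0:ℝ) ≤ (g k0 : ℝ) := Nat.cast_le.mpr hgmono.le_apply
      have hwwge : w ((g k0:ℝ)+1) (X (g k0)) ≤ ww (X (g k0)) := by
        have h : ∃ k, X (g k) = X (g k0) := ⟨k0, rfl⟩
        simp only [hwwdef, dif_pos h]
        have hfind : Nat.find h ≤ k0 := Nat.find_min' h rfl
        have hg : g (Nat.find h) ≤ g k0 := hgmono.monotone hfind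
        refine hW.mono _ _ (by positivity) ?_ (X (g k0))
        have : ((g (Nat.find h)):ℝ) ≤ ((g k0):ℝ) := Nat.cast_le.mpr hg
        linarith
      have hchain : ‖pdMulti d (A (g k0)) φ (X (g k0))‖ * w ((g k0:ℝ)+1) (X (g k0)) / M ((g k0:ℝ)+1) (A (g k0))
          ≤ ‖pdMulti d (A (g k0)) φ (X (g k0))‖ * ww (X (g k0)) / MM (A (g k0)) :=
        div_le_div₀ (mul_nonneg (norm_nonneg _) (hwwnn _))
          (mul_le_mul_of_nonneg_left hwwge (norm_nonneg _)) (hMMpos _) (hMMle (g k0))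
      have hkey := hAX (g k0)
      have hCb := hC (A (g k0)) (X (g k0))
      have hceil : C ≤ (⌈C⌉₊:ℝ) := Nat.le_ceil C
      have hk0C : C < (k0:ℝ) := by rw [hk0def]; push_cast; linarith
      linarith
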